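/- Let θ > 0 be irrational. Then there exist sequences of positive integers (nᵣ) and (mᵣ) with nᵣ → ∞ such that |nᵣθ − mᵣ| < 1/(√5 · nᵣ) for all r. -/

import Mathlib

open Filter

noncomputable def gx (θ : ℝ) : ℕ → ℝ
  | 0 => θ
  | n+1 => (Int.fract (gx θ n))⁻¹

noncomputable def ga (θ : ℝ) (n : ℕ) : ℕ := (⌊gx θ n⌋).toNat

noncomputable def gp (θ : ℝ) : ℕ → ℕ
  | 0 => 1
  | 1 => ga θ 0
  | n+2 => ga θ (n+1) * gp θ (n+1) + gp θ n

noncomputable def gq (θ : ℝ) : ℕ → ℕ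
  | 0 => 0
  | 1 => 1
  | n+2 => ga θ (n+1) * gq θ (n+1) + gq θ n

variable {θ : ℝ}

lemma gx_irr (hirr : Irrational θ) : ∀ n, Irrational (gx θ n)
  | 0 => hirr
  | n+1 => by
    have h := gx_irr hirr n
    have h2 : Irrational (Int.fract (gx θ n)) := by
      rw [← Int.self_sub_floor]
      exact h.sub_intCast _
    exact h2.inv

lemma fract_pos (hirr : Irrational θ) (n : ℕ) : 0 < Int.fract (gx θ n) :=
  Int.fract_pos.mpr ((gx_irr hirr n).ne_int _)

lemma gx_gt_one (hirr : Irrational θ) (n : ℕ) : 1 < gx θ (n+1) := by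
  have h1 := fract_pos hirr n
  have h2 := Int.fract_lt_one (gx θ n)
  show 1 < (Int.fract (gx θ n))⁻¹
  exact (one_lt_inv_iff₀).mpr ⟨h1, h2⟩

lemma ga_cast (hθ : 0 < θ) (hirr : Irrational θ) (n : ℕ) : (ga θ n : ℝ) = (⌊gx θ n⌋ : ℝ) := by
  have h : 0 ≤ ⌊gx θ n⌋ := by
    cases n with
    | zero => exact Int.floor_nonneg.mpr hθ.le
    | succ k => exact Int.floor_nonneg.mpr (le_of_lt (lt_trans one_pos (gx_gt_one hirr k)))
  simp only [ga]
  exact_mod_cast congrArg (Int.cast : ℤ → ℝ) (Int.toNat_of_nonneg h)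

lemma ga_pos (hirr : Irrational θ) (n : ℕ) : 1 ≤ ga θ (n+1) := by
  have h := gx_gt_one hirr n
  have h1 : 1 ≤ ⌊gx θ (n+1)⌋ := Int.le_floor.mpr (by exact_mod_cast h.le)
  simp only [ga]
  omega

lemma gx_step (hθ : 0 < θ) (hirr : Irrational θ) (n : ℕ) :
    gx θ n = (ga θ n : ℝ) + (gx θ (n+1))⁻¹ := by
  have h1 := fract_pos hirr n
  have : gx θ (n+1) = (Int.fract (gx θ n))⁻¹ := rfl
  rw [this, inv_inv, ga_cast hθ hirr, Int.fract]
  ring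

lemma gq_one_le (hirr : Irrational θ) : ∀ n, 1 ≤ gq θ (n+1)
  | 0 => le_refl 1
  | n+1 => by
    have h1 := ga_pos hirr n
    have h2 := gq_one_le hirr n
    show 1 ≤ ga θ (n+1) * gq θ (n+1) + gq θ n
    nlinarith

lemma gq_mono (hirr : Irrational θ) (n : ℕ) : gq θ (n+1) ≤ gq θ (n+2) := by
  have h1 := ga_pos hirr n
  show gq θ (n+1) ≤ ga θ (n+1) * gq θ (n+1) + gq θ n
  nlinarith

lemma gq_ge (hirr : Irrational θ) : ∀ n, n ≤ gq θ (n+1)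
  | 0 => Nat.zero_le _
  | n+1 => by
    have h1 := ga_pos hirr n
    have h2 := gq_ge hirr n
    have h3 := gq_one_le hirr n
    show n + 1 ≤ ga θ (n+1) * gq θ (n+1) + gq θ n
    cases n with
    | zero =>
      show 1 ≤ ga θ 1 * gq θ 1 + gq θ 0
      nlinarith
    | succ k =>
      have h4 : 1 ≤ gq θ (k+1) := gq_one_le hirr k
      nlinarith

lemma gkey (hθ : 0 < θ) (hirr : Irrational θ) : ∀ n,
    θ * ((gq θ (n+1) : ℝ) * gx θ (n+1) + (gq θ n : ℝ)) =
      (gp θ (n+1) : ℝ) * gx θ (n+1) + (gp θ n : ℝ)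
  | 0 => by
    have h := gx_step hθ hirr 0
    have hx : gx θ 0 = θ := rfl
    have hne : gx θ 1 ≠ 0 := ne_of_gt (lt_trans one_pos (gx_gt_one hirr 0))
    rw [hx] at h
    show θ * ((gq θ 1 : ℝ) * gx θ 1 + (gq θ 0 : ℝ)) = (gp θ 1 : ℝ) * gx θ 1 + (gp θ 0 : ℝ)
    have hq1 : (gq θ 1 : ℝ) = 1 := by norm_num [gq]
    have hq0 : (gq θ 0 : ℝ) = 0 := by norm_num [gq]
    have hp1 : (gp θ 1 : ℝ) = (ga θ 0 : ℝ) := by norm_num [gp]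
    have hp0 : (gp θ 0 : ℝ) = 1 := by norm_num [gp]
    rw [hq1, hq0, hp1, hp0]
    field_simp [hne] at h ⊢
    linear_combination h
  | n+1 => by
    have ih := gkey hθ hirr n
    have h := gx_step hθ hirr (n+1)
    have hne : gx θ (n+2) ≠ 0 := ne_of_gt (lt_trans one_pos (gx_gt_one hirr (n+1)))
    rw [h] at ih
    show θ * ((gq θ (n+2) : ℝ) * gx θ (n+2) + (gq θ (n+1) : ℝ)) =
      (gp θ (n+2) : ℝ) * gx θ (n+2) + (gp θ (n+1) : ℝ)
    have hq2 : (gq θ (n+2) : ℝ) = (ga θ (n+1) : ℝ) * (gq θ (n+1) : ℝ) + (gq θ n : ℝ) := by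
      show ((ga θ (n+1) * gq θ (n+1) + gq θ n : ℕ) : ℝ) = _
      push_cast; ring
    have hp2 : (gp θ (n+2) : ℝ) = (ga θ (n+1) : ℝ) * (gp θ (n+1) : ℝ) + (gp θ n : ℝ) := by
      show ((ga θ (n+1) * gp θ (n+1) + gp θ n : ℕ) : ℝ) = _
      push_cast; ring
    rw [hq2, hp2]
    field_simp [hne] at ih ⊢
    linear_combination ih

lemma gdet : ∀ n, (gp θ (n+1) : ℤ) * (gq θ n : ℤ) - (gp θ n : ℤ) * (gq θ (n+1) : ℤ) = (-1)^(n+1)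
  | 0 => by norm_num [gp, gq]
  | n+1 => by
    have ih : (gp θ (n+1) : ℤ) * (gq θ n : ℤ) - (gp θ n : ℤ) * (gq θ (n+1) : ℤ) = (-1)^(n+1) := gdet n
    have hq2 : (gq θ (n+2) : ℤ) = (ga θ (n+1) : ℤ) * (gq θ (n+1) : ℤ) + (gq θ n : ℤ) := by
      show ((ga θ (n+1) * gq θ (n+1) + gq θ n : ℕ) : ℤ) = _
      push_cast; ring
    have hp2 : (gp θ (n+2) : ℤ) = (ga θ (n+1) : ℤ) * (gp θ (n+1) : ℤ) + (gp θ n : ℤ) := by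
      show ((ga θ (n+1) * gp θ (n+1) + gp θ n : ℕ) : ℤ) = _
      push_cast; ring
    show (gp θ (n+2) : ℤ) * (gq θ (n+1) : ℤ) - (gp θ (n+1) : ℤ) * (gq θ (n+2) : ℤ) = (-1)^(n+2)
    rw [hq2, hp2]
    have : ((-1 : ℤ))^(n+2) = -((-1)^(n+1)) := by ring
    rw [this, ← ih]; ring

/-- `D n` -/
noncomputable def gD (θ : ℝ) (n : ℕ) : ℝ := (gq θ (n+1) : ℝ) * gx θ (n+1) + (gq θ n : ℝ)

lemma gD_pos (hirr : Irrational θ) (n : ℕ) : 0 < gD θ n := by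
  have h1 : (1:ℝ) ≤ (gq θ (n+1) : ℝ) := by exact_mod_cast gq_one_le hirr n
  have h2 := gx_gt_one hirr n
  have h3 : (0:ℝ) ≤ (gq θ n : ℝ) := by positivity
  unfold gD; nlinarith

lemma gE (hθ : 0 < θ) (hirr : Irrational θ) (n : ℕ) :
    (θ * (gq θ (n+1) : ℝ) - (gp θ (n+1) : ℝ)) * gD θ n = (-1)^n := by
  have hk := gkey hθ hirr n
  have hd : (gp θ (n+1) : ℝ) * (gq θ n : ℝ) - (gp θ n : ℝ) * (gq θ (n+1) : ℝ) = (-1)^(n+1) := by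
    exact_mod_cast congrArg (Int.cast : ℤ → ℝ) (gdet (θ := θ) n)
  unfold gD
  have : ((-1:ℝ))^n = -((-1)^(n+1)) := by ring
  rw [this, ← hd]
  linear_combination (gq θ (n+1) : ℝ) * hk

lemma abs_e (hθ : 0 < θ) (hirr : Irrational θ) (n : ℕ) :
    |θ * (gq θ (n+1) : ℝ) - (gp θ (n+1) : ℝ)| = 1 / gD θ n := by
  have h := gE hθ hirr n
  have hD := gD_pos hirr n
  have habs : |θ * (gq θ (n+1) : ℝ) - (gp θ (n+1) : ℝ)| * gD θ n = 1 := by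
    have := congrArg abs h
    rwa [abs_mul, abs_of_pos hD, abs_pow, abs_neg, abs_one, one_pow] at this
  field_simp
  linarith [habs]

/-- failure condition -/
def gF (θ : ℝ) (k : ℕ) : Prop := gx θ (k+1) + (gq θ k : ℝ)/(gq θ (k+1) : ℝ) ≤ Real.sqrt 5

lemma sqrt5_irr : Irrational (Real.sqrt 5) := by
  have : Nat.Prime 5 := by norm_num
  simpa using this.irrational_sqrt

lemma sqrt5_sq : (Real.sqrt 5) ^ 2 = 5 := Real.sq_sqrt (by norm_num)

lemma sqrt5_gt_two : 2 < Real.sqrt 5 := by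
  have := Real.lt_sqrt (x := 2) (y := 5) (by norm_num)
  rw [this]; norm_num

lemma rat_ne (a b : ℕ) (hb : 1 ≤ b) :
    Real.sqrt 5 * (((a:ℝ)/(b:ℝ))^2 + 1) ≠ 5 * ((a:ℝ)/(b:ℝ)) := by
  intro h
  have hb' : (b:ℝ) ≠ 0 := by positivity
  have hab : ((a:ℝ)^2 + (b:ℝ)^2) ≠ 0 := by positivity
  have h2 : Real.sqrt 5 = ((5 * a * b / (a^2 + b^2) : ℚ) : ℝ) := by
    push_cast
    rw [eq_div_iff (by positivity : ((a:ℝ)^2 + (b:ℝ)^2) ≠ 0)]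
    field_simp at h
    refine mul_right_cancel₀ hb' ?_
    linear_combination (b:ℝ) * h
  exact sqrt5_irr ⟨_, h2.symm⟩

lemma two_fail (hθ : 0 < θ) (hirr : Irrational θ) (k : ℕ) (h1 : gF θ k) (h2 : gF θ (k+1)) :
    Real.sqrt 5 < 2 * ((gq θ (k+1) : ℝ)/(gq θ (k+2) : ℝ)) + 1 := by
  set s := Real.sqrt 5 with hs
  set u := gx θ (k+2) with hu
  set v := (gq θ (k+1) : ℝ)/(gq θ (k+2) : ℝ) with hv
  have hq1 : (1:ℝ) ≤ (gq θ (k+1) : ℝ) := by exact_mod_cast gq_one_le hirr k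
  have hq2 : (1:ℝ) ≤ (gq θ (k+2) : ℝ) := by exact_mod_cast gq_one_le hirr (k+1)
  have hq1' : (gq θ (k+1) : ℝ) ≠ 0 := by linarith
  have hq2' : (gq θ (k+2) : ℝ) ≠ 0 := by linarith
  have hv0 : 0 < v := by rw [hv]; positivity
  have hmono : (gq θ (k+1) : ℝ) ≤ (gq θ (k+2) : ℝ) := by exact_mod_cast gq_mono hirr k
  have hv1 : v ≤ 1 := by rw [hv, div_le_one (by linarith)]; exact hmono
  have hu1 : 1 < u := gx_gt_one hirr (k+1)
  -- rewrite h1 as 1/u + 1/v ≤ s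
  have hrec : (gq θ (k+2) : ℝ) = (ga θ (k+1) : ℝ) * (gq θ (k+1) : ℝ) + (gq θ k : ℝ) := by
    show ((ga θ (k+1) * gq θ (k+1) + gq θ k : ℕ) : ℝ) = _
    push_cast; ring
  have hvinv : v⁻¹ = (ga θ (k+1) : ℝ) + (gq θ k : ℝ)/(gq θ (k+1) : ℝ) := by
    rw [hv, inv_div, hrec]; field_simp
  have hxstep : gx θ (k+1) = (ga θ (k+1) : ℝ) + u⁻¹ := gx_step hθ hirr (k+1)
  have h1' : u⁻¹ + v⁻¹ ≤ s := by
    have h3 := h1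
    unfold gF at h3
    rw [hxstep] at h3
    rw [hvinv]
    linarith
  have h2' : u + v ≤ s := by
    have h3 := h2
    unfold gF at h3
    rw [← hv] at h3
    linarith
  -- derive s * (v^2+1) ≤ 5 * v
  have hu0 : 0 < u := by linarith
  have huinv : 0 < u⁻¹ := by positivity
  have hvinv0 : 0 < v⁻¹ := by positivity
  have hkey : s * (v^2 + 1) ≤ 5 * v := by
    have hA : u ≤ s - v := by linarith
    have hB : u⁻¹ ≤ s - v⁻¹ := by linarith
    have hprod : 1 ≤ (s - v) * (s - v⁻¹) := by
      have := mul_le_mul hA hB (le_of_lt huinv) (by linarith [hu1, hv0] : (0:ℝ) ≤ s - v)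
      rwa [mul_inv_cancel₀ (ne_of_gt hu0)] at this
    have hss : s^2 = 5 := sqrt5_sq
    have hvv : v * v⁻¹ = 1 := mul_inv_cancel₀ (ne_of_gt hv0)
    nlinarith [hprod, hvv, hv0]
  have hne : s * (v^2 + 1) ≠ 5 * v := rat_ne _ _ (gq_one_le hirr (k+1))
  have hlt : s * (v^2 + 1) < 5 * v := lt_of_le_of_ne hkey hne
  have hss : s^2 = 5 := sqrt5_sq
  nlinarith [hlt, hss, hv0, hv1, sqrt5_gt_two, sq_nonneg (2*v + 1 - s)]

lemma three_fail (hθ : 0 < θ) (hirr : Irrational θ) (k : ℕ) :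
    ¬(gF θ k ∧ gF θ (k+1) ∧ gF θ (k+2)) := by
  rintro ⟨h1, h2, h3⟩
  set s := Real.sqrt 5 with hs
  have hA := two_fail hθ hirr k h1 h2
  have hB := two_fail hθ hirr (k+1) h2 h3
  set v := (gq θ (k+1) : ℝ)/(gq θ (k+2) : ℝ) with hv
  set w := (gq θ (k+2) : ℝ)/(gq θ (k+3) : ℝ) with hw
  have hq1 : (1:ℝ) ≤ (gq θ (k+1) : ℝ) := by exact_mod_cast gq_one_le hirr k
  have hq2 : (1:ℝ) ≤ (gq θ (k+2) : ℝ) := by exact_mod_cast gq_one_le hirr (k+1)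
  have hq3 : (1:ℝ) ≤ (gq θ (k+3) : ℝ) := by exact_mod_cast gq_one_le hirr (k+2)
  have hv0 : 0 < v := by rw [hv]; positivity
  have hrec : (gq θ (k+3) : ℝ) = (ga θ (k+2) : ℝ) * (gq θ (k+2) : ℝ) + (gq θ (k+1) : ℝ) := by
    show ((ga θ (k+2) * gq θ (k+2) + gq θ (k+1) : ℕ) : ℝ) = _
    push_cast; ring
  have hga : (1:ℝ) ≤ (ga θ (k+2) : ℝ) := by exact_mod_cast ga_pos hirr (k+1)
  have hq3ge : (gq θ (k+2) : ℝ) + (gq θ (k+1) : ℝ) ≤ (gq θ (k+3) : ℝ) := by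
    rw [hrec]; nlinarith
  have hwle : w ≤ 1/(1+v) := by
    rw [hw, hv]
    rw [div_le_div_iff₀ (by linarith) (by positivity)]
    have hexp : (gq θ (k+2) : ℝ) * (1 + (gq θ (k+1) : ℝ)/(gq θ (k+2) : ℝ))
        = (gq θ (k+2) : ℝ) + (gq θ (k+1) : ℝ) := by
      field_simp
    rw [hexp]
    linarith
  have hBv : (s - 1) * (1 + v) < 2 := by
    have h4 : s - 1 < 2 * w := by linarith
    have h5 : 2 * w ≤ 2 / (1 + v) := by
      have := hwle
      rw [div_eq_mul_inv] at *
      nlinarith [this]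
    have h6 : s - 1 < 2/(1+v) := lt_of_lt_of_le h4 h5
    rw [lt_div_iff₀ (by linarith)] at h6
    linarith
  have hss : s^2 = 5 := sqrt5_sq
  have hs2 : 2 < s := sqrt5_gt_two
  nlinarith [hA, hBv, hss, hs2, hv0,
    mul_pos (by linarith : (0:ℝ) < 2*v+1-s) (by linarith : (0:ℝ) < 1+v)]

lemma fail_of_not_lt (hθ : 0 < θ) (hirr : Irrational θ) (j : ℕ)
    (h : ¬ |θ * (gq θ (j+1) : ℝ) - (gp θ (j+1) : ℝ)| < 1/(Real.sqrt 5 * (gq θ (j+1) : ℝ))) :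
    gF θ j := by
  have hq : (1:ℝ) ≤ (gq θ (j+1) : ℝ) := by exact_mod_cast gq_one_le hirr j
  have hs0 : 0 < Real.sqrt 5 := by linarith [sqrt5_gt_two]
  have hD := gD_pos hirr j
  rw [abs_e hθ hirr j] at h
  have h2 : 1/(Real.sqrt 5 * (gq θ (j+1) : ℝ)) ≤ 1/ gD θ j := not_lt.mp h
  have h3 : gD θ j ≤ Real.sqrt 5 * (gq θ (j+1) : ℝ) := by
    rw [div_le_div_iff₀ (by positivity) hD] at h2
    linarith
  unfold gF
  have heq : gx θ (j+1) + (gq θ j : ℝ)/(gq θ (j+1) : ℝ) = gD θ j / (gq θ (j+1) : ℝ) := by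
    unfold gD
    field_simp
  rw [heq, div_le_iff₀ (by linarith)]
  nlinarith

lemma claim (hθ : 0 < θ) (hirr : Irrational θ) (k : ℕ) :
    ∃ j, k ≤ j ∧ |θ * (gq θ (j+1) : ℝ) - (gp θ (j+1) : ℝ)| < 1/(Real.sqrt 5 * (gq θ (j+1) : ℝ)) := by
  by_contra hcon
  push_neg at hcon
  apply three_fail hθ hirr k
  refine ⟨?_, ?_, ?_⟩
  · exact fail_of_not_lt hθ hirr k (by simpa using not_lt.mpr (hcon k le_rfl))
  · exact fail_of_not_lt hθ hirr (k+1) (by simpa using not_lt.mpr (hcon (k+1) (by omega)))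
  · exact fail_of_not_lt hθ hirr (k+2) (by simpa using not_lt.mpr (hcon (k+2) (by omega)))

theorem hurwitz_sequences (θ : ℝ) (hθ : 0 < θ) (hirr : Irrational θ) :
    ∃ (n m : ℕ → ℕ), Tendsto (fun r => (n r : ℝ)) atTop atTop ∧
      ∀ r, 0 < n r ∧ |(n r : ℝ) * θ - (m r : ℝ)| < 1 / (Real.sqrt 5 * (n r : ℝ)) := by
  choose j hj hlt using claim hθ hirr
  refine ⟨fun r => gq θ (j r + 1), fun r => gp θ (j r + 1), ?_, fun r => ⟨?_, ?_⟩⟩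
  · apply tendsto_atTop_mono (fun r => ?_) tendsto_natCast_atTop_atTop
    have h1 : r ≤ gq θ (j r + 1) := le_trans (hj r) (gq_ge hirr (j r))
    exact_mod_cast h1
  · exact lt_of_lt_of_le one_pos (gq_one_le hirr (j r))
  · have := hlt r
    rwa [mul_comm] at this
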